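/- For all binary words s and t, P(s ∘ t) = P_A(s)·P^B(t) + P_B(s)·P^A(t) − 1, where ∘ denotes concatenation. -/

import Mathlib

/-- `P s` is the number of distinct subsequences of the binary word `s`
(the letter `A` is `true`, the letter `B` is `false`), including the empty one. -/
def P (s : List Bool) : ℕ := s.sublists.toFinset.card

/-- `PA s` is the number of distinct subsequences of `s` starting with `A` (= `true`),
plus one for the empty subsequence. -/
def PA (s : List Bool) : ℕ :=
  ((s.sublists.toFinset).filter (fun t => t.head? = some true)).card + 1

/-- `PB s` is the number of distinct subsequences of `s` starting with `B` (= `false`),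
plus one for the empty subsequence. -/
def PB (s : List Bool) : ℕ :=
  ((s.sublists.toFinset).filter (fun t => t.head? = some false)).card + 1

/-- `QA s` is the number of distinct subsequences of `s` ending with `A` (= `true`),
plus one for the empty subsequence. -/
def QA (s : List Bool) : ℕ :=
  ((s.sublists.toFinset).filter (fun t => t.getLast? = some true)).card + 1

/-- `QB s` is the number of distinct subsequences of `s` ending with `B` (= `false`),
plus one for the empty subsequence. -/
def QB (s : List Bool) : ℕ :=
  ((s.sublists.toFinset).filter (fun t => t.getLast? = some false)).card + 1

/-- The word `gen a b`, defined by the Euclidean recursion: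
`gen 1 1 = []`, `gen a b = A ∘ gen (a-b) b` if `a > b`, `gen a b = B ∘ gen a (b-a)` if `b > a`. -/
def gen : ℕ → ℕ → List Bool
  | 0, _ => []
  | _ + 1, 0 => []
  | a + 1, b + 1 =>
    if a > b then true :: gen (a - b) (b + 1)
    else if b > a then false :: gen (a + 1) (b - a)
    else []
termination_by a b => a + b
decreasing_by all_goals omega

/-- `star s` swaps all letters `A` and `B` in `s`. -/
def star (s : List Bool) : List Bool := s.map (fun x => !x)

/-- `z n` is the alternating word `ABAB…` of length `n`. -/
def z : ℕ → List Bool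
  | 0 => []
  | n + 1 => true :: star (z n)

section Aux

private lemma mem_S {s w : List Bool} : w ∈ s.sublists.toFinset ↔ w.Sublist s := by
  simp [List.mem_sublists]

private lemma filter_last_eq (s : List Bool) (x : Bool) :
    ((s ++ [x]).sublists.toFinset.filter (fun w => w.getLast? = some x))
      = (s.sublists.toFinset).image (fun u => u ++ [x]) := by
  ext w
  simp only [Finset.mem_filter, Finset.mem_image, mem_S]
  constructor
  · rintro ⟨hw, hlast⟩
    rcases List.sublist_append_iff.mp hw with ⟨w1, w2, rfl, h1, h2⟩
    rcases List.sublist_eq_map_getElem h2 with _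
    -- w2 <+ [x] means w2 = [] or w2 = [x]
    have : w2 = [] ∨ w2 = [x] := by
      cases w2 with
      | nil => exact Or.inl rfl
      | cons a l =>
        right
        have := List.Sublist.length_le h2
        simp at this
        have hl : l = [] := by
          cases l with
          | nil => rfl
          | cons b m => simp at this
        subst hl
        have := List.Sublist.subset h2
        simp at this
        simp [this]
    rcases this with rfl | rfl
    · -- w1 ends with x, w1 <+ s
      simp only [List.append_nil] at hlast ⊢
      refine ⟨w1.dropLast, (List.dropLast_sublist w1).trans h1, ?_⟩
      exact List.dropLast_append_getLast? x hlast
    · exact ⟨w1, h1, rfl⟩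
  · rintro ⟨u, hu, rfl⟩
    exact ⟨List.Sublist.append hu (List.Sublist.refl _), List.getLast?_concat (l := u)⟩

private lemma filter_last_ne (s : List Bool) (x y : Bool) (hxy : y ≠ x) :
    ((s ++ [x]).sublists.toFinset.filter (fun w => w.getLast? = some y))
      = (s.sublists.toFinset.filter (fun w => w.getLast? = some y)) := by
  ext w
  simp only [Finset.mem_filter, mem_S]
  constructor
  · rintro ⟨hw, hlast⟩
    refine ⟨?_, hlast⟩
    rcases List.sublist_append_iff.mp hw with ⟨w1, w2, rfl, h1, h2⟩
    cases w2 with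
    | nil => simpa using h1
    | cons a l =>
      exfalso
      have hmem : a ∈ [x] := List.Sublist.subset h2 (by simp)
      simp at hmem
      have hlen := List.Sublist.length_le h2
      simp at hlen
      have hl : l = [] := by
        cases l with
        | nil => rfl
        | cons b m => simp at hlen
      subst hl
      rw [List.getLast?_concat] at hlast
      have ha : a = y := by injection hlast
      rw [← ha] at hxy
      exact hxy hmem
  · rintro ⟨hw, hlast⟩
    exact ⟨hw.trans (List.sublist_append_left s [x]), hlast⟩

private lemma filter_head_eq (t : List Bool) (x : Bool) :
    ((x :: t).sublists.toFinset.filter (fun w => w.head? = some x))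
      = (t.sublists.toFinset).image (fun u => x :: u) := by
  ext w
  simp only [Finset.mem_filter, Finset.mem_image, mem_S]
  constructor
  · rintro ⟨hw, hhead⟩
    rcases List.sublist_cons_iff.mp hw with h | ⟨r, rfl, hr⟩
    · -- w <+ t, w.head? = some x : then w = x :: w.tail, w.tail <+ w <+ t
      cases w with
      | nil => simp at hhead
      | cons a l =>
        simp at hhead
        exact ⟨l, (List.tail_sublist (a :: l)).trans h, by rw [hhead]⟩
    · exact ⟨r, hr, rfl⟩
  · rintro ⟨u, hu, rfl⟩
    exact ⟨List.cons_sublist_cons.mpr hu |>.trans (List.Sublist.refl _), rfl⟩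

private lemma filter_head_ne (t : List Bool) (x y : Bool) (hxy : y ≠ x) :
    ((x :: t).sublists.toFinset.filter (fun w => w.head? = some y))
      = (t.sublists.toFinset.filter (fun w => w.head? = some y)) := by
  ext w
  simp only [Finset.mem_filter, mem_S]
  constructor
  · rintro ⟨hw, hhead⟩
    refine ⟨?_, hhead⟩
    rcases List.sublist_cons_iff.mp hw with h | ⟨r, rfl, hr⟩
    · exact h
    · simp at hhead; exact absurd hhead.symm hxy
  · rintro ⟨hw, hhead⟩
    exact ⟨hw.trans (List.sublist_cons_self x t), hhead⟩

end Aux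

private lemma filter_none_eq {s : List Bool} (f : List Bool → Option Bool)
    (hf : ∀ w, f w = none ↔ w = []) :
    (s.sublists.toFinset.filter (fun w => ¬ f w = some true ∧ ¬ f w = some false))
      = {[]} := by
  ext w
  simp only [Finset.mem_filter, Finset.mem_singleton, mem_S]
  constructor
  · rintro ⟨hw, h1, h2⟩
    rw [← hf]
    cases h : f w with
    | none => rfl
    | some b => cases b <;> simp_all
  · rintro rfl
    have h0 : f [] = none := (hf []).mpr rfl
    exact ⟨List.nil_sublist s, by simp [h0], by simp [h0]⟩

private lemma P_split_head (t : List Bool) : P t + 1 = PA t + PB t := by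
  unfold P PA PB
  have h1 := Finset.card_filter_add_card_filter_not
    (s := t.sublists.toFinset) (p := fun w => w.head? = some true)
  have h2 := Finset.card_filter_add_card_filter_not
    (s := (t.sublists.toFinset.filter (fun w => ¬ w.head? = some true)))
    (p := fun w => w.head? = some false)
  rw [Finset.filter_filter, Finset.filter_filter] at h2
  have e1 : (t.sublists.toFinset.filter (fun w => ¬ w.head? = some true ∧ w.head? = some false))
      = t.sublists.toFinset.filter (fun w => w.head? = some false) := by
    apply Finset.filter_congr
    intro w _
    constructor
    · exact fun h => h.2
    · intro h; exact ⟨by simp [h], h⟩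
  have e2 : (t.sublists.toFinset.filter (fun w => ¬ w.head? = some true ∧ ¬ w.head? = some false))
      = {[]} := filter_none_eq _ (fun w => List.head?_eq_none_iff)
  rw [e1, e2] at h2
  simp only [Finset.card_singleton] at h2
  omega

private lemma P_split_last (s : List Bool) : P s + 1 = QA s + QB s := by
  unfold P QA QB
  have h1 := Finset.card_filter_add_card_filter_not
    (s := s.sublists.toFinset) (p := fun w => w.getLast? = some true)
  have h2 := Finset.card_filter_add_card_filter_not
    (s := (s.sublists.toFinset.filter (fun w => ¬ w.getLast? = some true)))
    (p := fun w => w.getLast? = some false)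
  rw [Finset.filter_filter, Finset.filter_filter] at h2
  have e1 : (s.sublists.toFinset.filter (fun w => ¬ w.getLast? = some true ∧ w.getLast? = some false))
      = s.sublists.toFinset.filter (fun w => w.getLast? = some false) := by
    apply Finset.filter_congr
    intro w _
    constructor
    · exact fun h => h.2
    · intro h; exact ⟨by simp [h], h⟩
  have e2 : (s.sublists.toFinset.filter (fun w => ¬ w.getLast? = some true ∧ ¬ w.getLast? = some false))
      = {[]} := filter_none_eq _ (fun w => List.getLast?_eq_none_iff)
  rw [e1, e2] at h2
  simp only [Finset.card_singleton] at h2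
  omega


private lemma QA_concat_true (s : List Bool) : QA (s ++ [true]) = P s + 1 := by
  unfold QA P
  rw [filter_last_eq]
  rw [Finset.card_image_of_injective _ (fun a b h => by simpa using h)]

private lemma QB_concat_false (s : List Bool) : QB (s ++ [false]) = P s + 1 := by
  unfold QB P
  rw [filter_last_eq]
  rw [Finset.card_image_of_injective _ (fun a b h => by simpa using h)]

private lemma QB_concat_true (s : List Bool) : QB (s ++ [true]) = QB s := by
  unfold QB
  rw [filter_last_ne s true false (by simp)]

private lemma QA_concat_false (s : List Bool) : QA (s ++ [false]) = QA s := by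
  unfold QA
  rw [filter_last_ne s false true (by simp)]

private lemma PA_cons_true (t : List Bool) : PA (true :: t) = P t + 1 := by
  unfold PA P
  rw [filter_head_eq]
  rw [Finset.card_image_of_injective _ (fun a b h => by simpa using h)]

private lemma PB_cons_false (t : List Bool) : PB (false :: t) = P t + 1 := by
  unfold PB P
  rw [filter_head_eq]
  rw [Finset.card_image_of_injective _ (fun a b h => by simpa using h)]

private lemma PB_cons_true (t : List Bool) : PB (true :: t) = PB t := by
  unfold PB
  rw [filter_head_ne t true false (by simp)]

private lemma PA_cons_false (t : List Bool) : PA (false :: t) = PA t := by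
  unfold PA
  rw [filter_head_ne t false true (by simp)]

private lemma QA_nil : QA [] = 1 := by decide
private lemma QB_nil : QB [] = 1 := by decide



/-- For all binary words `s` and `t`,
`P(s ∘ t) = P_A(s)·P^B(t) + P_B(s)·P^A(t) - 1`. -/
theorem P_append (s t : List Bool) :
    P (s ++ t) = QA s * PB t + QB s * PA t - 1 := by
  induction s using List.reverseRecOn generalizing t with
  | nil =>
    simp only [List.nil_append, QA_nil, QB_nil, one_mul]
    have := P_split_head t
    omega
  | append_singleton s' x ih =>
    have hassoc : s' ++ [x] ++ t = s' ++ (x :: t) := by simp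
    rw [hassoc]
    cases x with
    | true =>
      rw [ih (true :: t), QA_concat_true, QB_concat_true,
        PA_cons_true, PB_cons_true]
      have h1 := P_split_last s'
      have h2 := P_split_head t
      have key : QA s' * PB t + QB s' * (P t + 1) = (P s' + 1) * PB t + QB s' * PA t := by
        have hq : P s' + 1 = QA s' + QB s' := h1
        have hp : P t + 1 = PA t + PB t := h2
        rw [hq, hp]
        ring
      omega
    | false =>
      rw [ih (false :: t), QA_concat_false, QB_concat_false,
        PA_cons_false, PB_cons_false]
      have h1 := P_split_last s'
      have h2 := P_split_head t
      have key : QA s' * (P t + 1) + QB s' * PA t = QA s' * PB t + (P s' + 1) * PA t := by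
        rw [h1, h2]
        ring
      omega
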